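/- arXiv:1910.09618 — 2 statements merged into one kernel-verified Lean document; each statement's English description precedes it below -/
import Mathlib

section
/- Let z_λ denote the slack variable in an optimizer (J_λ, z_λ) of the unbalanced transport cost C_{λ,p}(x,y). Then ‖z_λ‖_p is monotone nonincreasing in λ: if 0 ≤ λ_1 < λ_2, and (J_1, z_1), (J_2, z_2) are optimizers for C_{λ_1,p}(x,y) and C_{λ_2,p}(x,y) respectively, then ‖z_2‖_p ≤ ‖z_1‖_p. -/
open Finset

variable {V E : Type*} [Fintype V] [Fintype E] [DecidableEq V]

/-- The divergence `Pᵀ J` of an edge flow on a graph given by the incidence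
structure `src, tgt : E → V`. -/
def div' (src tgt : E → V) (J : E → ℝ) (v : V) : ℝ :=
  (∑ e, if tgt e = v then J e else 0) - ∑ e, if src e = v then J e else 0

/-- The vector `p`-norm on `V → ℝ`. -/
noncomputable def pnorm (p : ℝ) (z : V → ℝ) : ℝ := (∑ v, |z v| ^ p) ^ (1 / p)

/-- The unbalanced transport cost `C_{λ,p}(x,y)`:
minimize `‖J‖₁ + λ‖z‖_p` subject to `Pᵀ J = y - x + z`. -/
noncomputable def Cunb (src tgt : E → V) (lam p : ℝ) (x y : V → ℝ) : ℝ :=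
  sInf {c : ℝ | ∃ (J : E → ℝ) (z : V → ℝ),
    (∀ v, div' src tgt J v = y v - x v + z v) ∧
    c = (∑ e, |J e|) + lam * pnorm p z}


/-- A pair `(J, z)` is an optimizer for `C_{λ,p}(x,y)` if it is feasible and
attains the minimum. -/
def IsOptimizer (src tgt : E → V) (lam p : ℝ) (x y : V → ℝ)
    (J : E → ℝ) (z : V → ℝ) : Prop :=
  (∀ v, div' src tgt J v = y v - x v + z v) ∧
  (∑ e, |J e|) + lam * pnorm p z = Cunb src tgt lam p x y


lemma pnorm_nonneg' (p : ℝ) (z : V → ℝ) : 0 ≤ pnorm p z := by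
  unfold pnorm
  apply Real.rpow_nonneg
  exact Finset.sum_nonneg fun v _ => Real.rpow_nonneg (abs_nonneg _) _

lemma Cunb_le_feasible (src tgt : E → V) (lam p : ℝ) (hlam : 0 ≤ lam)
    (x y : V → ℝ) (J : E → ℝ) (z : V → ℝ)
    (hf : ∀ v, div' src tgt J v = y v - x v + z v) :
    Cunb src tgt lam p x y ≤ (∑ e, |J e|) + lam * pnorm p z := by
  apply csInf_le
  · refine ⟨0, fun c hc => ?_⟩
    obtain ⟨J', z', _, rfl⟩ := hc
    have := mul_nonneg hlam (pnorm_nonneg' p z')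
    positivity
  · exact ⟨J, z, hf, rfl⟩

/-- The `p`-norm of the slack variable in an optimizer of `C_{λ,p}` is
monotone nonincreasing in `λ`. -/
theorem pnorm_slack_antitone_in_lambda (src tgt : E → V) (p : ℝ) (hp : 1 ≤ p)
    (lam₁ lam₂ : ℝ) (h₁ : 0 ≤ lam₁) (h₁₂ : lam₁ < lam₂) (x y : V → ℝ)
    (hx : ∀ v, 0 ≤ x v) (hy : ∀ v, 0 ≤ y v)
    (J₁ J₂ : E → ℝ) (z₁ z₂ : V → ℝ)
    (h1 : IsOptimizer src tgt lam₁ p x y J₁ z₁)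
    (h2 : IsOptimizer src tgt lam₂ p x y J₂ z₂) :
    pnorm p z₂ ≤ pnorm p z₁ := by
  have A : (∑ e, |J₁ e|) + lam₁ * pnorm p z₁ ≤ (∑ e, |J₂ e|) + lam₁ * pnorm p z₂ :=
    h1.2 ▸ Cunb_le_feasible src tgt lam₁ p h₁ x y J₂ z₂ h2.1
  have B : (∑ e, |J₂ e|) + lam₂ * pnorm p z₂ ≤ (∑ e, |J₁ e|) + lam₂ * pnorm p z₁ :=
    h2.2 ▸ Cunb_le_feasible src tgt lam₂ p (le_of_lt (lt_of_le_of_lt h₁ h₁₂)) x y J₁ z₁ h1.1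
  nlinarith [h₁₂]
end

section
/- For a connected unweighted graph G with incidence matrix P and probability distributions x, y on V, the Beckmann formulation min { Σ_{e∈E} |J_e| : P^T J = y − x } equals the Kantorovich formulation min_{π ∈ Π(x,y)} Σ_{v,w} d(v,w) π(v,w), where d is the shortest-path distance (minimum cost flow equals optimal transport on graphs). -/
open Finset

set_option linter.unusedSectionVars false
set_option maxHeartbeats 1000000

variable {V : Type*} [Fintype V] [DecidableEq V]


noncomputable def dflow (a c v w : V) : ℝ :=
  (if v = a ∧ w = c then 1 else 0) - (if v = c ∧ w = a then 1 else 0)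

noncomputable def wflow {G : SimpleGraph V} {a b : V} (p : G.Walk a b) (v w : V) : ℝ :=
  (p.darts.map fun d => dflow d.toProd.1 d.toProd.2 v w).sum

lemma dflow_antisymm (a c v w : V) : dflow a c v w = - dflow a c w v := by
  simp only [dflow]
  simp only [show (w = a ∧ v = c) ↔ (v = c ∧ w = a) from and_comm,
    show (w = c ∧ v = a) ↔ (v = a ∧ w = c) from and_comm]
  ring

lemma wflow_antisymm {G : SimpleGraph V} {a b : V} (p : G.Walk a b) (v w : V) :
    wflow p v w = - wflow p w v := by
  induction p with
  | nil => simp [wflow]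
  | cons h q ih =>
    simp only [wflow, SimpleGraph.Walk.darts_cons, List.map_cons, List.sum_cons] at *
    rw [ih, dflow_antisymm]; ring

lemma wflow_support {G : SimpleGraph V} {a b : V} (p : G.Walk a b) (v w : V)
    (h : ¬ G.Adj v w) : wflow p v w = 0 := by
  induction p with
  | nil => simp [wflow]
  | @cons u c b hadj q ih =>
    simp only [wflow, SimpleGraph.Walk.darts_cons, List.map_cons, List.sum_cons] at *
    have h1 : ¬ (v = u ∧ w = c) := by rintro ⟨rfl, rfl⟩; exact h hadj
    have h2 : ¬ (v = c ∧ w = u) := by rintro ⟨rfl, rfl⟩; exact h hadj.symm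
    rw [ih]
    simp [dflow, h1, h2]

lemma sum_pair_ind (a : V) (P : Prop) [Decidable P] :
    ∑ w : V, (if w = a ∧ P then (1:ℝ) else 0) = if P then 1 else 0 := by
  by_cases h : P <;> simp [h]

lemma dflow_div (a c v : V) : ∑ w, dflow a c w v =
    (if v = c then 1 else 0) - (if v = a then 1 else 0) := by
  simp only [dflow, Finset.sum_sub_distrib, sum_pair_ind]

lemma wflow_div {G : SimpleGraph V} {a b : V} (p : G.Walk a b) (v : V) :
    ∑ w, wflow p w v = (if v = b then 1 else 0) - (if v = a then 1 else 0) := by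
  induction p with
  | nil => simp [wflow]
  | @cons u c b hadj q ih =>
    simp only [wflow, SimpleGraph.Walk.darts_cons, List.map_cons, List.sum_cons] at *
    rw [Finset.sum_add_distrib, ih, dflow_div]
    ring

lemma dflow_cost (a c : V) : ∑ v, ∑ w, |dflow a c v w| ≤ 2 := by
  have key : ∀ v w : V, |dflow a c v w| ≤
      (if v = a ∧ w = c then (1:ℝ) else 0) + (if v = c ∧ w = a then 1 else 0) := by
    intro v w
    rw [dflow]
    calc |(if v = a ∧ w = c then (1:ℝ) else 0) - (if v = c ∧ w = a then 1 else 0)|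
        = |(if v = a ∧ w = c then (1:ℝ) else 0) + -(if v = c ∧ w = a then 1 else 0)| := by
          rw [sub_eq_add_neg]
      _ ≤ |(if v = a ∧ w = c then (1:ℝ) else 0)| + |-(if v = c ∧ w = a then (1:ℝ) else 0)| :=
          abs_add_le _ _
      _ = _ := by rw [abs_neg, abs_of_nonneg (by positivity), abs_of_nonneg (by positivity)]
  calc ∑ v, ∑ w, |dflow a c v w|
      ≤ ∑ v, ∑ w, ((if v = a ∧ w = c then (1:ℝ) else 0) + (if v = c ∧ w = a then 1 else 0)) :=
        Finset.sum_le_sum fun v _ => Finset.sum_le_sum fun w _ => key v w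
    _ = 2 := by
        simp only [Finset.sum_add_distrib]
        have h1 : ∀ (x y : V), ∑ v, ∑ w, (if v = x ∧ w = y then (1:ℝ) else 0) = 1 := by
          intro x y
          simp [ite_and, Finset.sum_ite_eq', Finset.sum_ite_eq]
        rw [h1, h1]; norm_num

lemma wflow_cost {G : SimpleGraph V} {a b : V} (p : G.Walk a b) :
    ∑ v, ∑ w, |wflow p v w| ≤ 2 * p.length := by
  induction p with
  | nil => simp [wflow]
  | @cons u c b hadj q ih =>
    simp only [wflow, SimpleGraph.Walk.darts_cons, List.map_cons, List.sum_cons,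
      SimpleGraph.Walk.length_cons] at *
    calc ∑ v, ∑ w, |dflow u c v w + (q.darts.map fun d => dflow d.toProd.1 d.toProd.2 v w).sum|
        ≤ ∑ v, ∑ w, (|dflow u c v w| + |(q.darts.map fun d => dflow d.toProd.1 d.toProd.2 v w).sum|) :=
          Finset.sum_le_sum fun v _ => Finset.sum_le_sum fun w _ => abs_add_le _ _
      _ = (∑ v, ∑ w, |dflow u c v w|) +
          ∑ v, ∑ w, |(q.darts.map fun d => dflow d.toProd.1 d.toProd.2 v w).sum| := by
          simp only [Finset.sum_add_distrib]
      _ ≤ 2 + 2 * q.length := add_le_add (dflow_cost _ _) ih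
      _ = 2 * ((q.length : ℝ) + 1) := by ring
      _ = 2 * ((q.length + 1 : ℕ) : ℝ) := by push_cast; ring

lemma mem_dartProds_edge {G : SimpleGraph V} {a b : V} {p : G.Walk a b} {x y : V}
    (h : (x, y) ∈ p.darts.map SimpleGraph.Dart.toProd) : s(x, y) ∈ p.edges := by
  rcases List.mem_map.1 h with ⟨d, hd, hxy⟩
  have : d.edge = s(x, y) := by rw [SimpleGraph.Dart.edge, hxy]
  rw [SimpleGraph.Walk.edges, ← this]
  exact List.mem_map_of_mem hd

lemma wflow_eq {G : SimpleGraph V} {a b : V} (p : G.Walk a b) (hnd : p.edges.Nodup) (v w : V) :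
    wflow p v w = (if (v, w) ∈ p.darts.map SimpleGraph.Dart.toProd then 1 else 0)
      - (if (w, v) ∈ p.darts.map SimpleGraph.Dart.toProd then 1 else 0) := by
  induction p with
  | nil => simp [wflow]
  | @cons u c b hadj q ih =>
    rw [SimpleGraph.Walk.edges_cons, List.nodup_cons] at hnd
    obtain ⟨hne, hnq⟩ := hnd
    have hq := ih hnq
    simp only [wflow, SimpleGraph.Walk.darts_cons, List.map_cons, List.sum_cons] at *
    rw [hq]
    have huc : u ≠ c := hadj.ne
    by_cases h1 : (v, w) = (u, c)
    · have hvw : v = u ∧ w = c := by rw [Prod.ext_iff] at h1; exact h1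
      obtain ⟨rfl, rfl⟩ := hvw
      have hA : (v, w) ∉ q.darts.map SimpleGraph.Dart.toProd := fun h =>
        hne (mem_dartProds_edge h)
      have hB : (w, v) ∉ q.darts.map SimpleGraph.Dart.toProd := fun h => by
        have := mem_dartProds_edge h; rw [Sym2.eq_swap] at this; exact hne this
      have e2 : ¬((w, v) ∈ (v, w) :: q.darts.map SimpleGraph.Dart.toProd) := by
        simp only [List.mem_cons]
        rintro (h | h)
        · rw [Prod.ext_iff] at h; exact huc h.2
        · exact hB h
      have hd : dflow v w v w = 1 := by
        simp [dflow, huc, fun h : v = w => huc h]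
      rw [hd, if_pos List.mem_cons_self, if_neg e2, if_neg hA, if_neg hB]
      ring
    · by_cases h2 : (w, v) = (u, c)
      · have hvw : w = u ∧ v = c := by rw [Prod.ext_iff] at h2; exact h2
        obtain ⟨rfl, rfl⟩ := hvw
        have hA : (w, v) ∉ q.darts.map SimpleGraph.Dart.toProd := fun h =>
          hne (mem_dartProds_edge h)
        have hB : (v, w) ∉ q.darts.map SimpleGraph.Dart.toProd := fun h => by
          have := mem_dartProds_edge h; rw [Sym2.eq_swap] at this; exact hne this
        have e1 : ¬((v, w) ∈ (w, v) :: q.darts.map SimpleGraph.Dart.toProd) := by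
          simp only [List.mem_cons]
          rintro (h | h)
          · rw [Prod.ext_iff] at h; exact huc h.1.symm
          · exact hB h
        have hd : dflow w v v w = -1 := by
          simp [dflow, huc, fun h : v = w => huc h.symm]
        rw [hd, if_pos List.mem_cons_self, if_neg e1, if_neg hA, if_neg hB]
        ring
      · have hd : dflow u c v w = 0 := by
          have e1 : ¬(v = u ∧ w = c) := fun ⟨h, h'⟩ => h1 (by simp [h, h'])
          have e2 : ¬(v = c ∧ w = u) := fun ⟨h, h'⟩ => h2 (by simp [h, h'])
          simp [dflow, e1, e2]
        rw [hd]
        have m1 : ((v, w) ∈ (u, c) :: q.darts.map SimpleGraph.Dart.toProd) ↔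
            ((v, w) ∈ q.darts.map SimpleGraph.Dart.toProd) := by simp [h1]
        have m2 : ((w, v) ∈ (u, c) :: q.darts.map SimpleGraph.Dart.toProd) ↔
            ((w, v) ∈ q.darts.map SimpleGraph.Dart.toProd) := by simp [h2]
        simp only [m1, m2]
        ring

lemma not_both_mem {G : SimpleGraph V} {a b : V} {p : G.Walk a b} (hnd : p.edges.Nodup)
    {v w : V} (h1 : (v, w) ∈ p.darts.map SimpleGraph.Dart.toProd)
    (h2 : (w, v) ∈ p.darts.map SimpleGraph.Dart.toProd) : False := by
  rcases List.mem_map.1 h1 with ⟨d1, hd1, he1⟩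
  rcases List.mem_map.1 h2 with ⟨d2, hd2, he2⟩
  have hvw : v ≠ w := by
    have := d1.adj; rw [he1] at this; exact this.ne
  have hedge : d1.edge = d2.edge := by
    rw [SimpleGraph.Dart.edge, SimpleGraph.Dart.edge, he1, he2]
    exact Sym2.eq_swap
  have hnd' : (p.darts.map SimpleGraph.Dart.edge).Nodup := hnd
  have : d1 = d2 := List.inj_on_of_nodup_map hnd' hd1 hd2 hedge
  rw [this, he2] at he1
  exact hvw (Prod.ext_iff.1 he1).2

lemma sum_ind_mem (L : List (V × V)) (hL : L.Nodup) :
    ∑ v, ∑ w, (if (v, w) ∈ L then (1:ℝ) else 0) = L.length := by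
  classical
  rw [← Finset.sum_product (f := fun x : V × V => if x ∈ L then (1:ℝ) else 0),
    Finset.sum_boole]
  have h1 : (univ ×ˢ univ).filter (fun x : V × V => x ∈ L) = L.toFinset := by
    apply Finset.ext; intro x; simp
  rw [h1, List.toFinset_card_of_nodup hL]

lemma sum_abs_wflow {G : SimpleGraph V} {a b : V} (p : G.Walk a b) (hnd : p.edges.Nodup) :
    ∑ v, ∑ w, |wflow p v w| = 2 * p.length := by
  have habs : ∀ v w, |wflow p v w| =
      (if (v, w) ∈ p.darts.map SimpleGraph.Dart.toProd then (1:ℝ) else 0)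
        + (if (w, v) ∈ p.darts.map SimpleGraph.Dart.toProd then 1 else 0) := by
    intro v w
    rw [wflow_eq p hnd]
    by_cases h1 : (v, w) ∈ p.darts.map SimpleGraph.Dart.toProd <;>
      by_cases h2 : (w, v) ∈ p.darts.map SimpleGraph.Dart.toProd
    · exact absurd h2 (fun h => not_both_mem hnd h1 h)
    all_goals simp [h1, h2]
  have hLnd : (p.darts.map SimpleGraph.Dart.toProd).Nodup := by
    have hnd' : (p.darts.map SimpleGraph.Dart.edge).Nodup := hnd
    exact (hnd'.of_map _).map SimpleGraph.Dart.toProd_injective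
  have hlen : ((p.darts.map SimpleGraph.Dart.toProd).length : ℝ) = p.length := by
    rw [List.length_map, SimpleGraph.Walk.length_darts]
  calc ∑ v, ∑ w, |wflow p v w|
      = (∑ v, ∑ w, (if (v, w) ∈ p.darts.map SimpleGraph.Dart.toProd then (1:ℝ) else 0))
        + ∑ v, ∑ w, (if (w, v) ∈ p.darts.map SimpleGraph.Dart.toProd then (1:ℝ) else 0) := by
        simp only [habs, Finset.sum_add_distrib]
    _ = (∑ v, ∑ w, (if (v, w) ∈ p.darts.map SimpleGraph.Dart.toProd then (1:ℝ) else 0))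
        + ∑ w, ∑ v, (if (w, v) ∈ p.darts.map SimpleGraph.Dart.toProd then (1:ℝ) else 0) := by
        rw [Finset.sum_comm (f := fun v w => if (w, v) ∈ p.darts.map SimpleGraph.Dart.toProd then (1:ℝ) else 0)]
    _ = 2 * p.length := by
        rw [sum_ind_mem _ hLnd, hlen]; ring



lemma sum_sum_skew {J : V → V → ℝ} (hskew : ∀ v w, J v w = - J w v) (R : Finset V) :
    ∑ v ∈ R, ∑ w ∈ R, J w v = 0 := by
  have h2 : ∑ v ∈ R, ∑ w ∈ R, J w v = ∑ w ∈ R, ∑ v ∈ R, J w v := Finset.sum_comm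
  have h3 : ∑ w ∈ R, ∑ v ∈ R, J w v = - ∑ w ∈ R, ∑ v ∈ R, J v w := by
    rw [← Finset.sum_neg_distrib]
    exact Finset.sum_congr rfl fun w _ => by
      rw [← Finset.sum_neg_distrib]
      exact Finset.sum_congr rfl fun v _ => hskew w v
  linarith [h2.trans h3]

lemma exists_pos_walk {G : SimpleGraph V} {J : V → V → ℝ}
    (hsupp : ∀ v w, ¬ G.Adj v w → J v w = 0) {s t : V}
    (h : Relation.ReflTransGen (fun a b => 0 < J a b) s t) :
    ∃ p : G.Walk s t, ∀ d ∈ p.darts, 0 < J d.toProd.1 d.toProd.2 := by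
  induction h with
  | refl => exact ⟨SimpleGraph.Walk.nil, by simp⟩
  | @tail b c hab hbc ih =>
    obtain ⟨p, hp⟩ := ih
    have hadj : G.Adj b c := by
      by_contra hna; rw [hsupp _ _ hna] at hbc; exact lt_irrefl _ hbc
    refine ⟨p.concat hadj, ?_⟩
    intro d hd
    rw [SimpleGraph.Walk.darts_concat, List.concat_eq_append, List.mem_append] at hd
    rcases hd with hd | hd
    · exact hp d hd
    · rw [List.mem_singleton] at hd
      subst hd
      exact hbc

lemma exists_sink {G : SimpleGraph V} {J : V → V → ℝ} {x y : V → ℝ}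
    (hskew : ∀ v w, J v w = - J w v) (hsupp : ∀ v w, ¬ G.Adj v w → J v w = 0)
    (hdiv : ∀ v, ∑ w, J w v = y v - x v) {s : V} (hs : y s < x s) :
    ∃ t, x t < y t ∧ ∃ p : G.Walk s t, ∀ d ∈ p.darts, 0 < J d.toProd.1 d.toProd.2 := by
  classical
  set step := fun a b => 0 < J a b with hstep
  set R : Finset V := univ.filter (fun v => Relation.ReflTransGen step s v) with hR
  have hsR : s ∈ R := by
    rw [hR, Finset.mem_filter]
    exact ⟨Finset.mem_univ s, Relation.ReflTransGen.refl⟩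
  have hRmem : ∀ v, v ∈ R ↔ Relation.ReflTransGen step s v := by intro v; simp [hR]
  have hconsv : 0 ≤ ∑ v ∈ R, (y v - x v) := by
    have hdd : ∑ v ∈ R, (y v - x v) = ∑ v ∈ R, ∑ w, J w v :=
      Finset.sum_congr rfl fun v _ => (hdiv v).symm
    have hsplit : ∑ v ∈ R, ∑ w, J w v
        = (∑ v ∈ R, ∑ w ∈ R, J w v) + ∑ v ∈ R, ∑ w ∈ Rᶜ, J w v := by
      rw [← Finset.sum_add_distrib]
      exact Finset.sum_congr rfl fun v _ => (Finset.sum_add_sum_compl R _).symm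
    have hzero := sum_sum_skew hskew R
    have hpos : 0 ≤ ∑ v ∈ R, ∑ w ∈ Rᶜ, J w v := by
      apply Finset.sum_nonneg; intro v hv
      apply Finset.sum_nonneg; intro w hw
      by_contra hneg
      push_neg at hneg
      have hJvw : 0 < J v w := by rw [hskew]; linarith
      have : w ∈ R := (hRmem w).2 (((hRmem v).1 hv).tail hJvw)
      rw [Finset.mem_compl] at hw
      exact hw this
    rw [hdd, hsplit, hzero]
    linarith
  by_contra hno
  push_neg at hno
  have key : ∀ t ∈ R, y t - x t ≤ 0 := by
    intro t ht
    by_contra hgt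
    push_neg at hgt
    obtain ⟨p, hp⟩ := exists_pos_walk hsupp ((hRmem t).1 ht)
    obtain ⟨d, hd, hdle⟩ := hno t (by linarith) p
    exact absurd (hp d hd) (not_lt.2 hdle)
  have hlt : ∑ v ∈ R, (y v - x v) < ∑ v ∈ R, (0:ℝ) :=
    Finset.sum_lt_sum key ⟨s, hsR, by linarith⟩
  rw [Finset.sum_const_zero] at hlt
  linarith

lemma diag_coupling (G : SimpleGraph V) (J : V → V → ℝ) (x y : V → ℝ)
    (hskew : ∀ v w, J v w = - J w v) (hdiv : ∀ v, ∑ w, J w v = y v - x v)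
    (hx : ∀ v, 0 ≤ x v) (hex : ¬ ∃ s, y s < x s) :
    ∃ π : V → V → ℝ, (∀ v w, 0 ≤ π v w) ∧ (∀ v, ∑ w, π v w = x v) ∧
      (∀ w, ∑ v, π v w = y w) ∧
      ∑ v, ∑ w, (G.dist v w : ℝ) * π v w ≤ (1/2) * ∑ v, ∑ w, |J v w| := by
  push_neg at hex
  have hsum : ∑ v, (y v - x v) = 0 := by
    have h1 : ∑ v, (y v - x v) = ∑ v, ∑ w, J w v :=
      Finset.sum_congr rfl fun v _ => (hdiv v).symm
    rw [h1]
    exact sum_sum_skew hskew univ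
  have hxy : ∀ v, x v = y v := by
    by_contra hne
    push_neg at hne
    obtain ⟨v, hv⟩ := hne
    have hvlt : x v < y v := lt_of_le_of_ne (hex v) hv
    have : ∑ v : V, (0:ℝ) < ∑ v, (y v - x v) :=
      Finset.sum_lt_sum (fun i _ => by linarith [hex i]) ⟨v, Finset.mem_univ v, by linarith⟩
    rw [Finset.sum_const_zero] at this
    linarith
  refine ⟨fun v w => if v = w then x v else 0, ?_, ?_, ?_, ?_⟩
  · intro v w; dsimp only; split
    · exact hx v
    · exact le_refl _
  · intro v; simp
  · intro w; simp [hxy w]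
  · have : ∀ v w : V, (G.dist v w : ℝ) * (if v = w then x v else 0) = 0 := by
      intro v w
      by_cases h : v = w
      · subst h; simp
      · simp [h]
    rw [Finset.sum_congr rfl fun v _ => Finset.sum_congr rfl fun w _ => this v w]
    simp
    positivity

open Classical in
noncomputable def meas (J : V → V → ℝ) (x y : V → ℝ) : ℕ :=
  ((univ : Finset (V × V)).filter (fun q => J q.1 q.2 ≠ 0)).card +
    ((univ : Finset V).filter (fun v => x v ≠ y v)).card

open Classical in
lemma meas_lt_meas {J J' : V → V → ℝ} {x y x' y' : V → ℝ}
    (hA : ∀ q : V × V, J' q.1 q.2 ≠ 0 → J q.1 q.2 ≠ 0)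
    (hB : ∀ v, x' v ≠ y' v → x v ≠ y v)
    (hstrict : (∃ q : V × V, J q.1 q.2 ≠ 0 ∧ J' q.1 q.2 = 0) ∨
      (∃ v, x v ≠ y v ∧ x' v = y' v)) :
    meas J' x' y' < meas J x y := by
  classical
  have hAs : (univ : Finset (V × V)).filter (fun q => J' q.1 q.2 ≠ 0) ⊆
      (univ : Finset (V × V)).filter (fun q => J q.1 q.2 ≠ 0) := by
    intro q hq
    rw [Finset.mem_filter] at *
    exact ⟨Finset.mem_univ _, hA q hq.2⟩
  have hBs : (univ : Finset V).filter (fun v => x' v ≠ y' v) ⊆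
      (univ : Finset V).filter (fun v => x v ≠ y v) := by
    intro v hv
    rw [Finset.mem_filter] at *
    exact ⟨Finset.mem_univ _, hB v hv.2⟩
  rcases hstrict with ⟨q, hq1, hq2⟩ | ⟨v, hv1, hv2⟩
  · refine Nat.add_lt_add_of_lt_of_le (Finset.card_lt_card ?_) (Finset.card_le_card hBs)
    rw [Finset.ssubset_iff_of_subset hAs]
    exact ⟨q, by simp [hq1], by simp [hq2]⟩
  · refine Nat.add_lt_add_of_le_of_lt (Finset.card_le_card hAs) (Finset.card_lt_card ?_)
    rw [Finset.ssubset_iff_of_subset hBs]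
    exact ⟨v, by simp [hv1], by simp [hv2]⟩


lemma sum_sum_pair (s t : V) (C : ℝ) :
    ∑ v, ∑ w, (if v = s ∧ w = t then C else 0) = C := by
  have h : ∀ v : V, ∑ w, (if v = s ∧ w = t then C else 0) = if v = s then C else 0 := by
    intro v; by_cases h : v = s <;> simp [h]
  rw [Finset.sum_congr rfl fun v _ => h v]
  simp

lemma decomp_step (G : SimpleGraph V) (n : ℕ)
    (ih : ∀ J : V → V → ℝ, ∀ x y : V → ℝ,
      (∀ v w, J v w = - J w v) → (∀ v w, ¬ G.Adj v w → J v w = 0) →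
      (∀ v, ∑ w, J w v = y v - x v) → (∀ v, 0 ≤ x v) → (∀ v, 0 ≤ y v) →
      meas J x y ≤ n →
      ∃ π : V → V → ℝ, (∀ v w, 0 ≤ π v w) ∧ (∀ v, ∑ w, π v w = x v) ∧
        (∀ w, ∑ v, π v w = y w) ∧
        ∑ v, ∑ w, (G.dist v w : ℝ) * π v w ≤ (1/2) * ∑ v, ∑ w, |J v w|)
    (J : V → V → ℝ) (x y : V → ℝ)
    (hskew : ∀ v w, J v w = - J w v) (hsupp : ∀ v w, ¬ G.Adj v w → J v w = 0)
    (hdiv : ∀ v, ∑ w, J w v = y v - x v) (hx : ∀ v, 0 ≤ x v) (hy : ∀ v, 0 ≤ y v)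
    (hm : meas J x y ≤ n + 1) {s : V} (hs : y s < x s) :
    ∃ π : V → V → ℝ, (∀ v w, 0 ≤ π v w) ∧ (∀ v, ∑ w, π v w = x v) ∧
      (∀ w, ∑ v, π v w = y w) ∧
      ∑ v, ∑ w, (G.dist v w : ℝ) * π v w ≤ (1/2) * ∑ v, ∑ w, |J v w| := by
  classical
  obtain ⟨t, hts, p0, hp0⟩ := exists_sink hskew hsupp hdiv hs
  set p := p0.bypass with hpdef
  have hpath : p.IsPath := p0.bypass_isPath
  have hppos : ∀ d ∈ p.darts, 0 < J d.toProd.1 d.toProd.2 :=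
    fun d hd => hp0 d (p0.darts_bypass_subset hd)
  have hnd : p.edges.Nodup := hpath.isTrail.edges_nodup
  set L := p.darts.map SimpleGraph.Dart.toProd with hLdef
  have hLpos : ∀ q ∈ L, 0 < J q.1 q.2 := by
    intro q hq
    rcases List.mem_map.1 hq with ⟨d, hd, rfl⟩
    exact hppos d hd
  set S : Finset ℝ :=
    insert (x s - y s) (insert (y t - x t) (L.map fun q => J q.1 q.2).toFinset) with hSdef
  have hSne : S.Nonempty := ⟨_, Finset.mem_insert_self _ _⟩
  set ε := S.min' hSne with hεdef
  have hεS : ε ∈ S := S.min'_mem hSne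
  have hεle : ∀ r ∈ S, ε ≤ r := fun r hr => S.min'_le r hr
  have hεpos : 0 < ε := by
    rcases Finset.mem_insert.1 hεS with h | h
    · rw [h]; linarith
    rcases Finset.mem_insert.1 h with h | h
    · rw [h]; linarith
    · rcases List.mem_map.1 (List.mem_toFinset.1 h) with ⟨q, hq, hqe⟩
      rw [← hqe]; exact hLpos q hq
  have hε1 : ε ≤ x s - y s := hεle _ (Finset.mem_insert_self _ _)
  have hε2 : ε ≤ y t - x t :=
    hεle _ (Finset.mem_insert.2 (Or.inr (Finset.mem_insert_self _ _)))
  have hε3 : ∀ q ∈ L, ε ≤ J q.1 q.2 := fun q hq =>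
    hεle _ (Finset.mem_insert.2 (Or.inr (Finset.mem_insert.2 (Or.inr
      (List.mem_toFinset.2 (List.mem_map_of_mem hq))))))
  have hst : s ≠ t := fun h => by rw [h] at hs; linarith
  set J' : V → V → ℝ := fun v w => J v w - ε * wflow p v w with hJ'def
  set x' : V → ℝ := fun v => x v - (if v = s then ε else 0) with hx'def
  set y' : V → ℝ := fun v => y v - (if v = t then ε else 0) with hy'def
  have hwf : ∀ v w, wflow p v w =
      (if (v, w) ∈ L then (1:ℝ) else 0) - (if (w, v) ∈ L then 1 else 0) :=
    wflow_eq p hnd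
  have hskew' : ∀ v w, J' v w = - J' w v := by
    intro v w; simp only [hJ'def]; rw [hskew v w, wflow_antisymm p v w]; ring
  have hsupp' : ∀ v w, ¬ G.Adj v w → J' v w = 0 := by
    intro v w h; simp only [hJ'def]; rw [hsupp v w h, wflow_support p v w h]; ring
  have hdiv' : ∀ v, ∑ w, J' w v = y' v - x' v := by
    intro v
    simp only [hJ'def]
    rw [Finset.sum_sub_distrib, hdiv, ← Finset.mul_sum, wflow_div]
    simp only [hx'def, hy'def, mul_sub, mul_ite, mul_one, mul_zero]
    ring
  have hx'0 : ∀ v, 0 ≤ x' v := by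
    intro v; simp only [hx'def]; by_cases h : v = s
    · rw [if_pos h, h]; linarith [hy s]
    · rw [if_neg h]; linarith [hx v]
  have hy'0 : ∀ v, 0 ≤ y' v := by
    intro v; simp only [hy'def]; by_cases h : v = t
    · rw [if_pos h, h]; linarith [hx t]
    · rw [if_neg h]; linarith [hy v]
  have hwz : ∀ v w, J v w = 0 → J' v w = 0 := by
    intro v w h0
    have h1 : (v, w) ∉ L := fun hm' => by have := hLpos _ hm'; rw [h0] at this; linarith
    have h2 : (w, v) ∉ L := fun hm' => by
      have := hLpos _ hm'
      have hvw : J w v = 0 := by rw [hskew w v, h0]; ring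
      rw [hvw] at this; linarith
    simp only [hJ'def]; rw [hwf, if_neg h1, if_neg h2, h0]; ring
  have hm' : meas J' x' y' ≤ n := by
    have hlt : meas J' x' y' < meas J x y := by
      apply meas_lt_meas
      · intro q hq
        by_contra h0
        exact hq (hwz _ _ (by simpa using h0))
      · intro v hv
        by_cases hvs : v = s
        · subst hvs; exact hs.ne'
        by_cases hvt : v = t
        · subst hvt; exact (ne_of_lt hts)
        · simp only [hx'def, hy'def, if_neg hvs, if_neg hvt] at hv
          simpa using hv
      · rcases Finset.mem_insert.1 hεS with h | h
        · right
          refine ⟨s, hs.ne', ?_⟩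
          simp only [hx'def, hy'def, eq_self_iff_true, if_true, if_neg hst]
          rw [h]; ring
        rcases Finset.mem_insert.1 h with h | h
        · right
          refine ⟨t, (ne_of_lt hts), ?_⟩
          simp only [hx'def, hy'def, eq_self_iff_true, if_true, if_neg (Ne.symm hst)]
          rw [h]; ring
        · left
          rcases List.mem_map.1 (List.mem_toFinset.1 h) with ⟨q, hq, hqe⟩
          refine ⟨q, (hLpos q hq).ne', ?_⟩
          have hmem : (q.1, q.2) ∈ L := by rw [Prod.mk.eta]; exact hq
          have hrev : (q.2, q.1) ∉ L := fun hc => not_both_mem hnd hmem hc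
          simp only [hJ'def]
          rw [hwf, if_pos hmem, if_neg hrev, ← hqe]; ring
    omega
  obtain ⟨π', hπ'0, hπ'r, hπ'c, hπ'cost⟩ := ih J' x' y' hskew' hsupp' hdiv' hx'0 hy'0 hm'
  have habs : ∀ v w, |J' v w| = |J v w| - ε * |wflow p v w| := by
    intro v w
    simp only [hJ'def]
    rw [hwf]
    by_cases h1 : (v, w) ∈ L
    · have h2 : (w, v) ∉ L := fun hc => not_both_mem hnd h1 hc
      have hJpos : 0 < J v w := hLpos (v, w) h1
      have hle : ε ≤ J v w := hε3 (v, w) h1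
      rw [if_pos h1, if_neg h2, abs_of_pos hJpos]
      rw [abs_of_nonneg (by linarith : (0:ℝ) ≤ J v w - ε * (1 - 0))]
      rw [abs_of_nonneg (by norm_num : (0:ℝ) ≤ (1:ℝ) - 0)]
      try ring
    · by_cases h2 : (w, v) ∈ L
      · have hJpos : 0 < J w v := hLpos (w, v) h2
        have hJneg : J v w < 0 := by rw [hskew v w]; linarith
        have hle : ε ≤ J w v := hε3 (w, v) h2
        have hle' : ε ≤ - J v w := by rw [hskew v w] at *; linarith
        rw [if_neg h1, if_pos h2, abs_of_neg hJneg]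
        rw [abs_of_nonpos (by linarith : J v w - ε * ((0:ℝ) - 1) ≤ 0)]
        rw [abs_of_nonpos (by norm_num : (0:ℝ) - 1 ≤ 0)]
        try ring
      · rw [if_neg h1, if_neg h2]
        norm_num
  have hcost' : ∑ v, ∑ w, |J' v w| = (∑ v, ∑ w, |J v w|) - ε * (2 * p.length) := by
    have h1 : ∀ v, ∑ w, |J' v w| = (∑ w, |J v w|) - ε * ∑ w, |wflow p v w| := by
      intro v
      rw [Finset.sum_congr rfl fun w _ => habs v w, Finset.sum_sub_distrib, Finset.mul_sum]
    rw [Finset.sum_congr rfl fun v _ => h1 v, Finset.sum_sub_distrib]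
    have h2 : ∑ v, ε * ∑ w, |wflow p v w| = ε * ∑ v, ∑ w, |wflow p v w| := by
      rw [Finset.mul_sum]
    rw [h2, sum_abs_wflow p hnd]
  have hdle : (G.dist s t : ℝ) ≤ p.length := by
    exact_mod_cast SimpleGraph.dist_le p
  refine ⟨fun v w => π' v w + (if v = s ∧ w = t then ε else 0), ?_, ?_, ?_, ?_⟩
  · intro v w; dsimp only
    by_cases h : v = s ∧ w = t
    · rw [if_pos h]; have := hπ'0 v w; linarith
    · rw [if_neg h]; simpa using hπ'0 v w
  · intro v
    rw [Finset.sum_add_distrib, hπ'r]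
    have h : ∑ w, (if v = s ∧ w = t then ε else 0) = if v = s then ε else 0 := by
      by_cases h : v = s <;> simp [h]
    rw [h]; simp only [hx'def]; ring
  · intro w
    rw [Finset.sum_add_distrib, hπ'c]
    have h : ∑ v, (if v = s ∧ w = t then ε else 0) = if w = t then ε else 0 := by
      by_cases h : w = t <;> simp [h]
    rw [h]; simp only [hy'def]; ring
  · have hsplit : ∑ v, ∑ w, (G.dist v w : ℝ) * (π' v w + (if v = s ∧ w = t then ε else 0))
        = (∑ v, ∑ w, (G.dist v w : ℝ) * π' v w)
          + ∑ v, ∑ w, (if v = s ∧ w = t then (G.dist s t : ℝ) * ε else 0) := by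
      rw [← Finset.sum_add_distrib]
      refine Finset.sum_congr rfl fun v _ => ?_
      rw [← Finset.sum_add_distrib]
      refine Finset.sum_congr rfl fun w _ => ?_
      by_cases h : v = s ∧ w = t
      · obtain ⟨rfl, rfl⟩ := h
        rw [if_pos ⟨rfl, rfl⟩, if_pos ⟨rfl, rfl⟩]; ring
      · rw [if_neg h, if_neg h]; ring
    rw [hsplit, sum_sum_pair]
    have h2 : ∑ v, ∑ w, |J' v w| = (∑ v, ∑ w, |J v w|) - ε * (2 * p.length) := hcost'
    have hεd : (G.dist s t : ℝ) * ε ≤ (p.length : ℝ) * ε := by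
      apply mul_le_mul_of_nonneg_right hdle (le_of_lt hεpos)
    rw [h2] at hπ'cost
    linarith

lemma decomp (G : SimpleGraph V) : ∀ n : ℕ, ∀ J : V → V → ℝ, ∀ x y : V → ℝ,
    (∀ v w, J v w = - J w v) → (∀ v w, ¬ G.Adj v w → J v w = 0) →
    (∀ v, ∑ w, J w v = y v - x v) → (∀ v, 0 ≤ x v) → (∀ v, 0 ≤ y v) →
    meas J x y ≤ n →
    ∃ π : V → V → ℝ, (∀ v w, 0 ≤ π v w) ∧ (∀ v, ∑ w, π v w = x v) ∧
      (∀ w, ∑ v, π v w = y w) ∧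
      ∑ v, ∑ w, (G.dist v w : ℝ) * π v w ≤ (1/2) * ∑ v, ∑ w, |J v w| := by
  intro n
  induction n with
  | zero =>
    intro J x y hskew hsupp hdiv hx hy hm
    by_cases hex : ∃ s, y s < x s
    · obtain ⟨s, hs⟩ := hex
      exfalso
      have hmem : s ∈ (univ : Finset V).filter (fun v => x v ≠ y v) := by
        rw [Finset.mem_filter]; exact ⟨Finset.mem_univ _, hs.ne'⟩
      have h1 : 0 < ((univ : Finset V).filter (fun v => x v ≠ y v)).card :=
        Finset.card_pos.2 ⟨s, hmem⟩
      have h2 : meas J x y = 0 := Nat.le_zero.1 hm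
      rw [meas] at h2
      omega
    · exact diag_coupling G J x y hskew hdiv hx hex
  | succ n ih =>
    intro J x y hskew hsupp hdiv hx hy hm
    by_cases hex : ∃ s, y s < x s
    · obtain ⟨s, hs⟩ := hex
      exact decomp_step G n ih J x y hskew hsupp hdiv hx hy hm hs
    · exact diag_coupling G J x y hskew hdiv hx hex

lemma coupling_to_flow (G : SimpleGraph V) (hconn : G.Connected) (π : V → V → ℝ)
    (x y : V → ℝ)
    (hπ0 : ∀ v w, 0 ≤ π v w) (hrow : ∀ v, ∑ w, π v w = x v)
    (hcol : ∀ w, ∑ v, π v w = y w) :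
    ∃ J : V → V → ℝ, (∀ v w, J v w = - J w v) ∧ (∀ v w, ¬ G.Adj v w → J v w = 0) ∧
      (∀ v, ∑ w, J w v = y v - x v) ∧
      (1/2) * (∑ v, ∑ w, |J v w|) ≤ ∑ v, ∑ w, (G.dist v w : ℝ) * π v w := by
  classical
  have hwalk : ∀ a b : V, ∃ p : G.Walk a b, p.length = G.dist a b := fun a b =>
    hconn.exists_walk_length_eq_dist a b
  choose p hp using hwalk
  refine ⟨fun v w => ∑ a, ∑ b, π a b * wflow (p a b) v w, ?_, ?_, ?_, ?_⟩
  · intro v w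
    rw [← Finset.sum_neg_distrib]
    refine Finset.sum_congr rfl fun a _ => ?_
    rw [← Finset.sum_neg_distrib]
    refine Finset.sum_congr rfl fun b _ => ?_
    rw [wflow_antisymm (p a b) v w]; ring
  · intro v w h
    refine Finset.sum_eq_zero fun a _ => Finset.sum_eq_zero fun b _ => ?_
    rw [wflow_support (p a b) v w h]; ring
  · intro v
    have hswap : ∑ w, ∑ a, ∑ b, π a b * wflow (p a b) w v
        = ∑ a, ∑ b, π a b * ∑ w, wflow (p a b) w v := by
      rw [Finset.sum_comm]
      refine Finset.sum_congr rfl fun a _ => ?_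
      rw [Finset.sum_comm]
      refine Finset.sum_congr rfl fun b _ => ?_
      rw [Finset.mul_sum]
    rw [hswap]
    have hterm : ∀ a b : V, π a b * ∑ w, wflow (p a b) w v
        = π a b * (if v = b then (1:ℝ) else 0) - π a b * (if v = a then (1:ℝ) else 0) := by
      intro a b; rw [wflow_div]; ring
    rw [Finset.sum_congr rfl fun a _ => Finset.sum_congr rfl fun b _ => hterm a b]
    have hsplit : ∑ a, ∑ b, (π a b * (if v = b then (1:ℝ) else 0)
          - π a b * (if v = a then (1:ℝ) else 0))
        = (∑ a, ∑ b, π a b * (if v = b then (1:ℝ) else 0))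
          - ∑ a, ∑ b, π a b * (if v = a then (1:ℝ) else 0) := by
      rw [← Finset.sum_sub_distrib]
      exact Finset.sum_congr rfl fun a _ => Finset.sum_sub_distrib _ _
    rw [hsplit]
    have h1 : ∑ a, ∑ b : V, π a b * (if v = b then (1:ℝ) else 0) = y v := by
      rw [← hcol v]
      refine Finset.sum_congr rfl fun a _ => ?_
      simp [mul_ite, Finset.sum_ite_eq]
    have h2 : ∑ a, ∑ b : V, π a b * (if v = a then (1:ℝ) else 0) = x v := by
      have h2a : ∀ a, ∑ b : V, π a b * (if v = a then (1:ℝ) else 0)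
          = x a * (if v = a then 1 else 0) := by
        intro a; rw [← Finset.sum_mul, hrow a]
      rw [Finset.sum_congr rfl fun a _ => h2a a]
      simp [mul_ite, Finset.sum_ite_eq]
    rw [h1, h2]
  · have hbound : ∀ v w, |∑ a, ∑ b, π a b * wflow (p a b) v w|
        ≤ ∑ a, ∑ b, π a b * |wflow (p a b) v w| := by
      intro v w
      calc |∑ a, ∑ b, π a b * wflow (p a b) v w|
          ≤ ∑ a, |∑ b, π a b * wflow (p a b) v w| := Finset.abs_sum_le_sum_abs _ _
        _ ≤ ∑ a, ∑ b, |π a b * wflow (p a b) v w| :=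
            Finset.sum_le_sum fun a _ => Finset.abs_sum_le_sum_abs _ _
        _ = ∑ a, ∑ b, π a b * |wflow (p a b) v w| := by
            refine Finset.sum_congr rfl fun a _ => Finset.sum_congr rfl fun b _ => ?_
            rw [abs_mul, abs_of_nonneg (hπ0 a b)]
    have hswap4 : ∑ v, ∑ w, ∑ a, ∑ b, π a b * |wflow (p a b) v w|
        = ∑ a, ∑ b, ∑ v, ∑ w, π a b * |wflow (p a b) v w| := by
      calc ∑ v, ∑ w, ∑ a, ∑ b, π a b * |wflow (p a b) v w|
          = ∑ v, ∑ a, ∑ w, ∑ b, π a b * |wflow (p a b) v w| :=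
            Finset.sum_congr rfl fun v _ => Finset.sum_comm
        _ = ∑ a, ∑ v, ∑ w, ∑ b, π a b * |wflow (p a b) v w| := Finset.sum_comm
        _ = ∑ a, ∑ v, ∑ b, ∑ w, π a b * |wflow (p a b) v w| :=
            Finset.sum_congr rfl fun a _ => Finset.sum_congr rfl fun v _ => Finset.sum_comm
        _ = ∑ a, ∑ b, ∑ v, ∑ w, π a b * |wflow (p a b) v w| :=
            Finset.sum_congr rfl fun a _ => Finset.sum_comm
    have hinner : ∀ a b : V, ∑ v, ∑ w, π a b * |wflow (p a b) v w|
        ≤ π a b * (2 * (G.dist a b : ℝ)) := by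
      intro a b
      have : ∑ v, ∑ w, π a b * |wflow (p a b) v w|
          = π a b * ∑ v, ∑ w, |wflow (p a b) v w| := by
        rw [Finset.mul_sum]
        exact Finset.sum_congr rfl fun v _ => (Finset.mul_sum _ _ _).symm
      rw [this]
      have hc := wflow_cost (p a b)
      rw [hp a b] at hc
      exact mul_le_mul_of_nonneg_left hc (hπ0 a b)
    calc (1/2) * (∑ v, ∑ w, |∑ a, ∑ b, π a b * wflow (p a b) v w|)
        ≤ (1/2) * ∑ v, ∑ w, ∑ a, ∑ b, π a b * |wflow (p a b) v w| := by
          have := Finset.sum_le_sum (fun v (_ : v ∈ univ) =>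
            Finset.sum_le_sum (fun w (_ : w ∈ univ) => hbound v w))
          linarith
      _ = (1/2) * ∑ a, ∑ b, ∑ v, ∑ w, π a b * |wflow (p a b) v w| := by rw [hswap4]
      _ ≤ (1/2) * ∑ a, ∑ b, π a b * (2 * (G.dist a b : ℝ)) := by
          have := Finset.sum_le_sum (fun a (_ : a ∈ univ) =>
            Finset.sum_le_sum (fun b (_ : b ∈ univ) => hinner a b))
          linarith
      _ = ∑ a, ∑ b, (G.dist a b : ℝ) * π a b := by
          rw [Finset.mul_sum]
          refine Finset.sum_congr rfl fun a _ => ?_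
          rw [Finset.mul_sum]
          refine Finset.sum_congr rfl fun b _ => ?_
          ring


/-- Beckmann formulation: minimal `ℓ¹` cost of a flow (an antisymmetric
function supported on edges, each edge counted twice in the cost) whose
divergence is `y - x`. -/
noncomputable def W1B (G : SimpleGraph V) (x y : V → ℝ) : ℝ :=
  sInf {c : ℝ | ∃ J : V → V → ℝ,
    (∀ v w, J v w = - J w v) ∧
    (∀ v w, ¬ G.Adj v w → J v w = 0) ∧
    (∀ v, ∑ w, J w v = y v - x v) ∧
    c = (1 / 2) * ∑ v, ∑ w, |J v w|}

/-- Kantorovich formulation: minimal transport cost over couplings, with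
respect to the shortest-path distance. -/
noncomputable def W1K (G : SimpleGraph V) (x y : V → ℝ) : ℝ :=
  sInf {c : ℝ | ∃ π : V → V → ℝ,
    (∀ v w, 0 ≤ π v w) ∧
    (∀ v, ∑ w, π v w = x v) ∧
    (∀ w, ∑ v, π v w = y w) ∧
    c = ∑ v, ∑ w, (G.dist v w : ℝ) * π v w}

/-- On a connected unweighted graph, the Beckmann (minimum-cost flow)
formulation equals the Kantorovich (optimal transport) formulation of the
Wasserstein-1 distance between probability distributions. -/
theorem beckmann_eq_kantorovich (G : SimpleGraph V) (hconn : G.Connected)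
    (x y : V → ℝ) (hx : (∀ v, 0 ≤ x v) ∧ ∑ v, x v = 1)
    (hy : (∀ v, 0 ≤ y v) ∧ ∑ v, y v = 1) :
    W1B G x y = W1K G x y := by
  classical
  set B : Set ℝ := {c : ℝ | ∃ J : V → V → ℝ,
    (∀ v w, J v w = - J w v) ∧
    (∀ v w, ¬ G.Adj v w → J v w = 0) ∧
    (∀ v, ∑ w, J w v = y v - x v) ∧
    c = (1 / 2) * ∑ v, ∑ w, |J v w|} with hB
  set K : Set ℝ := {c : ℝ | ∃ π : V → V → ℝ,
    (∀ v w, 0 ≤ π v w) ∧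
    (∀ v, ∑ w, π v w = x v) ∧
    (∀ w, ∑ v, π v w = y w) ∧
    c = ∑ v, ∑ w, (G.dist v w : ℝ) * π v w} with hK
  have hW1B : W1B G x y = sInf B := rfl
  have hW1K : W1K G x y = sInf K := rfl
  -- the product coupling
  have hπ0 : (∑ v, ∑ w, (G.dist v w : ℝ) * (x v * y w)) ∈ K := by
    refine ⟨fun v w => x v * y w, fun v w => mul_nonneg (hx.1 v) (hy.1 w), ?_, ?_, rfl⟩
    · intro v; rw [← Finset.mul_sum, hy.2, mul_one]
    · intro w; rw [← Finset.sum_mul, hx.2, one_mul]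
  have hKne : K.Nonempty := ⟨_, hπ0⟩
  -- from any coupling, a flow of no greater cost
  have hKB : ∀ c ∈ K, ∃ c' ∈ B, c' ≤ c := by
    rintro c ⟨π, h0, h1, h2, rfl⟩
    obtain ⟨J, hJ1, hJ2, hJ3, hJ4⟩ := coupling_to_flow G hconn π x y h0 h1 h2
    exact ⟨(1 / 2) * ∑ v, ∑ w, |J v w|, ⟨J, hJ1, hJ2, hJ3, rfl⟩, hJ4⟩
  have hBne : B.Nonempty := by
    obtain ⟨c', hc', _⟩ := hKB _ hπ0
    exact ⟨c', hc'⟩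
  -- from any flow, a coupling of no greater cost
  have hBK : ∀ c ∈ B, ∃ c' ∈ K, c' ≤ c := by
    rintro c ⟨J, hJ1, hJ2, hJ3, rfl⟩
    obtain ⟨π, h0, h1, h2, h3⟩ :=
      decomp G (meas J x y) J x y hJ1 hJ2 hJ3 hx.1 hy.1 (le_refl _)
    exact ⟨∑ v, ∑ w, (G.dist v w : ℝ) * π v w, ⟨π, h0, h1, h2, rfl⟩, h3⟩
  have hBbdd : BddBelow B := by
    refine ⟨0, fun c hc => ?_⟩
    obtain ⟨J, _, _, _, rfl⟩ := hc
    positivity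
  have hKbdd : BddBelow K := by
    refine ⟨0, fun c hc => ?_⟩
    obtain ⟨π, h0, _, _, rfl⟩ := hc
    apply Finset.sum_nonneg; intro v _
    apply Finset.sum_nonneg; intro w _
    exact mul_nonneg (by positivity) (h0 v w)
  rw [hW1B, hW1K]
  apply le_antisymm
  · apply le_csInf hKne
    intro c hc
    obtain ⟨c', hc', hle⟩ := hKB c hc
    exact (csInf_le hBbdd hc').trans hle
  · apply le_csInf hBne
    intro c hc
    obtain ⟨c', hc', hle⟩ := hBK c hc
    exact (csInf_le hKbdd hc').trans hle
end
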